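/- For every x∈I₁ and every κ with 0<|κ|<δ₂, there is a constant C₁₀>0, independent of ζ, such that |g_x(ζ)| ≤ C₁₀/|ζ|^{2+q_y} holds for all ζ in the sector D_{ν,θ₀} = {ζ∈ℂ : Re ζ>ν, −θ₀<arg ζ<0} with |ζ| sufficiently large, where y=u⁻¹(x) and q_y is the decay exponent from assumption (a12). -/

import Mathlib

open MeasureTheory Set Filter

/-- Existence of the principal value `P.V. ∫_ν^∞ v(y,z)/(y+z−ξ) dz = L`. -/
def HasPrincipalValue (v : ℝ → ℝ → ℝ) (ν y ξ L : ℝ) : Prop :=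
  Tendsto (fun ε : ℝ =>
      (∫ z in Ioo ν (ξ - y - ε), v y z / (y + z - ξ)) +
        ∫ z in Ioi (ξ - y + ε), v y z / (y + z - ξ))
    (nhdsWithin 0 (Ioi 0)) (nhds L)

/-- `G(y,ζ) = ∫_ν^∞ v(y,z)/(y+z−ζ) dz`. -/
noncomputable def bandG (v : ℝ → ℝ → ℝ) (ν y : ℝ) (ζ : ℂ) : ℂ :=
  ∫ z in Ioi ν, (v y z : ℂ) / (y + z - ζ)

/-- The half-line `(−∞, c]` viewed as a subset of `ℂ`. -/
def slitSet (c : ℝ) : Set ℂ := {ζ : ℂ | ζ.im = 0 ∧ ζ.re ≤ c}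

/-- The open box `(x−Δ, x+Δ) + i(−Δ, Δ)` in `ℂ`. -/
def cBox (x Δ : ℝ) : Set ℂ :=
  {ζ : ℂ | x - Δ < ζ.re ∧ ζ.re < x + Δ ∧ -Δ < ζ.im ∧ ζ.im < Δ}

/-- `D±(x,κ,ζ) = x − ζ − κ²ϱ(x)·𝒢(u⁻¹(x),ζ)` for a continuation `𝒢` of `G`. -/
noncomputable def Dfun (ρ uinv : ℝ → ℝ) (GG : ℝ → ℂ → ℂ) (κ x : ℝ) (ζ : ℂ) : ℂ :=
  (x : ℂ) - ζ - (κ : ℂ) ^ 2 * (ρ x : ℂ) * GG (uinv x) ζ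

/-- `g_x(ζ) = κ²ϱ(x)v(u⁻¹(x),ζ)/(D₊(x,κ,ζ+u⁻¹(x))·D₋(x,κ,ζ+u⁻¹(x)))`. -/
noncomputable def gfun (ρ uinv : ℝ → ℝ) (GΩ GΩ' : ℝ → ℂ → ℂ) (vC : ℝ → ℂ → ℂ)
    (κ x : ℝ) (ζ : ℂ) : ℂ :=
  (κ : ℂ) ^ 2 * (ρ x : ℂ) * vC (uinv x) ζ /
    (Dfun ρ uinv GΩ κ x (ζ + (uinv x : ℂ)) * Dfun ρ uinv GΩ' κ x (ζ + (uinv x : ℂ)))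

/-- The open sector `D_{ν,θ} = {ζ : Re ζ > ν, −θ < arg ζ < 0}`. -/
def sector (ν θ : ℝ) : Set ℂ := {ζ : ℂ | ν < ζ.re ∧ -θ < ζ.arg ∧ ζ.arg < 0}


lemma nonneg_of_ae_nonneg (f : ℝ → ℝ) (ν : ℝ)
    (hcont : ∀ z ∈ Ioi ν, ContinuousAt f z)
    (hae : ∀ᵐ z, z ∈ Ici ν → 0 ≤ f z) :
    ∀ z ∈ Ioi ν, 0 ≤ f z := by
  intro z₀ hz₀
  by_contra hneg
  push_neg at hneg
  have h1 : ∀ᶠ z in nhds z₀, f z < 0 :=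
    Filter.Tendsto.eventually_lt_const hneg (hcont z₀ hz₀)
  have h2 : ∀ᶠ z in nhds z₀, z ∈ Ioi ν := (isOpen_Ioi).eventually_mem hz₀
  obtain ⟨ε, hε, hball⟩ := Metric.eventually_nhds_iff.1 (h1.and h2)
  have hsub : Ioo (z₀ - ε) (z₀ + ε) ⊆ {z | ¬ (z ∈ Ici ν → 0 ≤ f z)} := by
    intro z hz
    rw [← Real.ball_eq_Ioo] at hz
    have := hball (Metric.mem_ball.1 hz)
    intro h
    exact absurd (h (mem_Ici.2 (le_of_lt this.2))) (not_le.2 this.1)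
  have hnull : volume {z | ¬ (z ∈ Ici ν → 0 ≤ f z)} = 0 := by
    rw [← MeasureTheory.ae_iff]  -- check
    exact hae
  have := measure_mono_null hsub hnull
  rw [Real.volume_Ioo] at this
  simp only [ENNReal.ofReal_eq_zero] at this
  linarith


lemma sub_ne_zero_of_im (ζ : ℂ) (hζ : ζ.im < 0) (z : ℝ) : ((z : ℂ) - ζ) ≠ 0 := by
  intro h
  have : ((z : ℂ) - ζ).im = 0 := by rw [h]; simp
  simp only [Complex.sub_im, Complex.ofReal_im, zero_sub, neg_eq_zero] at this
  exact absurd this (ne_of_lt hζ)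

lemma integral_inv_sub (ζ : ℂ) (hζ : ζ.im < 0) (a b : ℝ) :
    ∫ z in a..b, ((z : ℂ) - ζ)⁻¹ =
      Complex.log ((b : ℂ) - ζ) - Complex.log ((a : ℂ) - ζ) := by
  have key : ∀ z : ℝ, HasDerivAt (fun t : ℝ => Complex.log ((t : ℂ) - ζ))
      (((z : ℂ) - ζ)⁻¹) z := by
    intro z
    have h1 : ((z : ℂ) - ζ) ∈ Complex.slitPlane := by
      apply Complex.mem_slitPlane_iff.2
      right
      simp only [Complex.sub_im, Complex.ofReal_im, zero_sub, ne_eq, neg_eq_zero]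
      exact ne_of_lt hζ
    have h2 : HasDerivAt (fun w : ℂ => Complex.log (w - ζ)) (((z : ℂ) - ζ)⁻¹) (z : ℂ) := by
      have := (Complex.hasDerivAt_log h1).comp (z : ℂ) ((hasDerivAt_id ((z : ℂ))).sub_const ζ)
      rw [mul_one] at this
      exact this
    exact h2.comp_ofReal
  apply intervalIntegral.integral_eq_sub_of_hasDerivAt (fun z _ => key z)
  apply Continuous.intervalIntegrable
  exact (Complex.continuous_ofReal.sub continuous_const).inv₀ (sub_ne_zero_of_im ζ hζ)

lemma norm_log_diff_le (w₁ w₂ : ℂ) (h : ‖w₁‖ = ‖w₂‖) :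
    ‖Complex.log w₁ - Complex.log w₂‖ ≤ 2 * Real.pi := by
  have hre : (Complex.log w₁ - Complex.log w₂).re = 0 := by
    simp [Complex.sub_re, Complex.log_re, h]
  calc ‖Complex.log w₁ - Complex.log w₂‖
      ≤ |(Complex.log w₁ - Complex.log w₂).re| + |(Complex.log w₁ - Complex.log w₂).im| :=
        Complex.norm_le_abs_re_add_abs_im _
    _ ≤ 0 + (|w₁.arg| + |w₂.arg|) := by
        rw [hre]
        simp only [abs_zero, Complex.sub_im, Complex.log_im]
        exact add_le_add le_rfl (abs_sub _ _)
    _ ≤ 0 + (Real.pi + Real.pi) :=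
        add_le_add le_rfl (add_le_add (Complex.abs_arg_le_pi _) (Complex.abs_arg_le_pi _))
    _ = 2 * Real.pi := by ring

lemma cauchy_int_bound (f : ℝ → ℝ) (ν C₂ C₃ : ℝ)
    (hint : IntegrableOn f (Ici ν))
    (hnn : ∀ z ∈ Ioi ν, 0 ≤ f z)
    (hbd : ∀ z ∈ Ici ν, f z ≤ C₂)
    (hdiff : ∀ z ∈ Ioi ν, DifferentiableAt ℝ f z)
    (hC₃ : ∀ z ∈ Ici ν, |deriv f z| ≤ C₃)
    (ζ : ℂ) (him : ζ.im < 0) (hre : ν + 2 ≤ ζ.re) :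
    ‖∫ z in Ioi ν, (f z : ℂ) / ((z : ℂ) - ζ)‖ ≤
      (∫ z in Ioi ν, f z) + 2 * C₃ + 2 * Real.pi * C₂ := by
  set ξ := ζ.re with hξ
  set S : Set ℝ := Ioo (ξ - 1) (ξ + 1) with hS
  have hSsub : S ⊆ Ioi ν := by
    intro z hz
    have : ξ - 1 < z := hz.1
    simp only [mem_Ioi]
    linarith
  have hne : ∀ z : ℝ, ((z : ℂ) - ζ) ≠ 0 := sub_ne_zero_of_im ζ him
  have habs_pos : ∀ z : ℝ, 0 < ‖(z : ℂ) - ζ‖ := fun z =>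
    norm_pos_iff.mpr (hne z)
  have him_le : ∀ z : ℝ, -ζ.im ≤ ‖(z : ℂ) - ζ‖ := by
    intro z
    have := Complex.abs_im_le_norm ((z : ℂ) - ζ)
    simp only [Complex.sub_im, Complex.ofReal_im, zero_sub, abs_neg] at this
    calc -ζ.im ≤ |ζ.im| := neg_le_abs _
      _ ≤ _ := this
  have hre_le : ∀ z : ℝ, |z - ξ| ≤ ‖(z : ℂ) - ζ‖ := by
    intro z
    have := Complex.abs_re_le_norm ((z : ℂ) - ζ)
    simpa using this
  set g : ℝ → ℂ := fun z => (f z : ℂ) / ((z : ℂ) - ζ) with hg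
  -- integrability of g on Ioi ν
  have hfi : IntegrableOn (fun z => (f z : ℂ)) (Ioi ν) :=
    (hint.mono_set Ioi_subset_Ici_self).ofReal
  have hinv_cont : Continuous (fun z : ℝ => ((z : ℂ) - ζ)⁻¹) :=
    (Complex.continuous_ofReal.sub continuous_const).inv₀ hne
  have hgint : IntegrableOn g (Ioi ν) := by
    have hb : ∃ Cb, ∀ z : ℝ, ‖((z : ℂ) - ζ)⁻¹‖ ≤ Cb := by
      refine ⟨(-ζ.im)⁻¹, fun z => ?_⟩
      rw [norm_inv]
      exact inv_anti₀ (by linarith) (him_le z)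
    have h2 := hfi.bdd_mul (hinv_cont.aestronglyMeasurable.restrict) (ae_of_all _ hb.choose_spec)
    have heq : g = fun z : ℝ => ((z : ℂ) - ζ)⁻¹ * (f z : ℂ) := by
      funext z
      simp [hg, div_eq_mul_inv, mul_comm]
    rw [IntegrableOn, heq]
    exact h2
  have hC₃nn : 0 ≤ C₃ := le_trans (abs_nonneg _) (hC₃ ν self_mem_Ici)
  have hxi : ν < ξ := by linarith
  have hC₂nn : 0 ≤ C₂ := le_trans (hnn ξ hxi) (hbd ξ (le_of_lt hxi))
  have hTmeas : MeasurableSet (Ioi ν \ S) := measurableSet_Ioi.diff measurableSet_Ioo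
  have hsplit : ∫ z in Ioi ν, g z = (∫ z in Ioi ν \ S, g z) + ∫ z in S, g z := by
    rw [← MeasureTheory.setIntegral_union disjoint_sdiff_left measurableSet_Ioo
      (hgint.mono_set diff_subset) (hgint.mono_set hSsub), diff_union_of_subset hSsub]
  have h2int : IntegrableOn (fun z : ℝ => (f ξ : ℂ) / ((z : ℂ) - ζ)) S := by
    apply (Continuous.integrableOn_Icc ?_).mono_set Ioo_subset_Icc_self
    exact continuous_const.div (Complex.continuous_ofReal.sub continuous_const) hne
  have h1int : IntegrableOn (fun z : ℝ => ((f z : ℂ) - (f ξ : ℂ)) / ((z : ℂ) - ζ)) S := by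
    have h3 := (hgint.mono_set hSsub).sub h2int
    have heq : (fun z : ℝ => ((f z : ℂ) - (f ξ : ℂ)) / ((z : ℂ) - ζ))
        = fun z : ℝ => g z - (f ξ : ℂ) / ((z : ℂ) - ζ) := by
      funext z
      rw [hg, sub_div]
    rw [heq]
    exact h3
  have hSint : ∫ z in S, g z = (∫ z in S, ((f z : ℂ) - (f ξ : ℂ)) / ((z : ℂ) - ζ))
      + ∫ z in S, (f ξ : ℂ) / ((z : ℂ) - ζ) := by
    rw [← MeasureTheory.integral_add h1int h2int]
    apply MeasureTheory.integral_congr_ae (Filter.EventuallyEq.of_eq ?_)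
    funext z
    rw [hg, ← add_div, sub_add_cancel]
  have hfnn_ae : 0 ≤ᵐ[volume.restrict (Ioi ν)] f :=
    (ae_restrict_iff' measurableSet_Ioi).2 (Filter.Eventually.of_forall hnn)
  have hb1 : ‖∫ z in Ioi ν \ S, g z‖ ≤ ∫ z in Ioi ν, f z := by
    calc ‖∫ z in Ioi ν \ S, g z‖ ≤ ∫ z in Ioi ν \ S, ‖g z‖ :=
          norm_integral_le_integral_norm _
      _ ≤ ∫ z in Ioi ν \ S, f z := by
          apply MeasureTheory.setIntegral_mono_on ((hgint.mono_set diff_subset).norm)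
            ((hint.mono_set Ioi_subset_Ici_self).mono_set diff_subset) hTmeas
          intro z hz
          have hz1 : z ∈ Ioi ν := hz.1
          have hz2 : (1:ℝ) ≤ |z - ξ| := by
            have hz3 : z ∉ S := hz.2
            rw [hS, mem_Ioo, not_and_or] at hz3
            rcases hz3 with h | h
            · push_neg at h
              rw [abs_sub_comm, abs_of_nonneg (by linarith)]
              linarith
            · push_neg at h
              rw [abs_of_nonneg (by linarith)]
              linarith
          have habs1 : (1:ℝ) ≤ ‖(z:ℂ) - ζ‖ := le_trans hz2 (hre_le z)
          have hgz : ‖g z‖ = |f z| / ‖(z:ℂ)-ζ‖ := by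
            rw [hg, norm_div, Complex.norm_real, Real.norm_eq_abs]
          rw [hgz, abs_of_nonneg (hnn z hz1)]
          exact div_le_self (hnn z hz1) habs1
      _ ≤ ∫ z in Ioi ν, f z := MeasureTheory.setIntegral_mono_set
          (hint.mono_set Ioi_subset_Ici_self) hfnn_ae
          (HasSubset.Subset.eventuallyLE diff_subset)
  have hvolS : volume S < ⊤ := by rw [hS, Real.volume_Ioo]; exact ENNReal.ofReal_lt_top
  have hb2 : ‖∫ z in S, ((f z : ℂ) - (f ξ : ℂ)) / ((z : ℂ) - ζ)‖ ≤ C₃ * 2 := by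
    have hbdd : ∀ z ∈ S, ‖((f z : ℂ) - (f ξ : ℂ)) / ((z : ℂ) - ζ)‖ ≤ C₃ := by
      intro z hz
      have hzIoi : z ∈ Ioi ν := hSsub hz
      have hlip : |f z - f ξ| ≤ C₃ * |z - ξ| := by
        have := Convex.norm_image_sub_le_of_norm_deriv_le hdiff
          (fun w hw => hC₃ w (mem_Ici.2 (le_of_lt hw))) (convex_Ioi ν) (mem_Ioi.2 hxi) hzIoi
        simpa [Real.norm_eq_abs] using this
      have : ‖((f z : ℂ) - (f ξ : ℂ)) / ((z : ℂ) - ζ)‖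
          = |f z - f ξ| / ‖(z:ℂ) - ζ‖ := by
        rw [← Complex.ofReal_sub, norm_div, Complex.norm_real, Real.norm_eq_abs]
      rw [this, div_le_iff₀ (habs_pos z)]
      calc |f z - f ξ| ≤ C₃ * |z - ξ| := hlip
        _ ≤ C₃ * ‖(z:ℂ) - ζ‖ := by
            exact mul_le_mul_of_nonneg_left (hre_le z) hC₃nn
    have := MeasureTheory.norm_setIntegral_le_of_norm_le_const hvolS hbdd
    have hvol2 : (volume S).toReal = 2 := by
      rw [hS, Real.volume_Ioo, ENNReal.toReal_ofReal (by linarith)]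
      ring
    rw [measureReal_def, hvol2] at this
    exact this
  have hb3 : ‖∫ z in S, (f ξ : ℂ) / ((z : ℂ) - ζ)‖ ≤ 2 * Real.pi * C₂ := by
    have hInt : ∫ z in S, (f ξ : ℂ) / ((z : ℂ) - ζ)
        = (f ξ : ℂ) * ∫ z in S, ((z : ℂ) - ζ)⁻¹ := by
      simp_rw [div_eq_mul_inv]
      exact MeasureTheory.integral_const_mul _ _
    have hIoo : ∫ z in S, ((z : ℂ) - ζ)⁻¹ = ∫ z in (ξ-1)..(ξ+1), ((z : ℂ) - ζ)⁻¹ := by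
      rw [intervalIntegral.integral_of_le (by linarith),
        MeasureTheory.integral_Ioc_eq_integral_Ioo]
    have hlog := integral_inv_sub ζ him (ξ-1) (ξ+1)
    have habs_eq : ‖((ξ+1 : ℝ) : ℂ) - ζ‖ = ‖((ξ-1 : ℝ) : ℂ) - ζ‖ := by
      rw [Complex.norm_def, Complex.norm_def]
      congr 1
      simp only [Complex.normSq_apply, Complex.sub_re, Complex.ofReal_re, Complex.sub_im,
        Complex.ofReal_im, ← hξ]
      ring
    have hlogbd := norm_log_diff_le _ _ habs_eq
    have hfξ : ‖(f ξ : ℂ)‖ ≤ C₂ := by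
      rw [Complex.norm_real, Real.norm_eq_abs, abs_of_nonneg (hnn ξ hxi)]
      exact hbd ξ (le_of_lt hxi)
    rw [hInt, hIoo, hlog, norm_mul]
    calc ‖(f ξ:ℂ)‖ * ‖Complex.log (((ξ+1:ℝ):ℂ) - ζ) - Complex.log (((ξ-1:ℝ):ℂ) - ζ)‖
        ≤ C₂ * (2*Real.pi) := mul_le_mul hfξ hlogbd (norm_nonneg _) hC₂nn
      _ = 2*Real.pi*C₂ := by ring
  calc ‖∫ z in Ioi ν, g z‖
      = ‖(∫ z in Ioi ν \ S, g z) + ((∫ z in S, ((f z : ℂ) - (f ξ : ℂ)) / ((z : ℂ) - ζ))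
          + ∫ z in S, (f ξ : ℂ) / ((z : ℂ) - ζ))‖ := by rw [hsplit, hSint]
    _ ≤ ‖∫ z in Ioi ν \ S, g z‖ + (‖∫ z in S, ((f z : ℂ) - (f ξ : ℂ)) / ((z : ℂ) - ζ)‖
          + ‖∫ z in S, (f ξ : ℂ) / ((z : ℂ) - ζ)‖) :=
        le_trans (norm_add_le _ _) (by gcongr; exact norm_add_le _ _)
    _ ≤ (∫ z in Ioi ν, f z) + (C₃ * 2 + 2 * Real.pi * C₂) := by
        gcongr
    _ = (∫ z in Ioi ν, f z) + 2 * C₃ + 2 * Real.pi * C₂ := by ring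

set_option maxHeartbeats 2000000 in
/-- Lemma VI.4: for `x ∈ I₁` and `0 < |κ| < δ₂` there is `C₁₀ > 0`,
independent of `ζ`, with `|g_x(ζ)| ≤ C₁₀/|ζ|^{2+q_y}`, `y = u⁻¹(x)`, for all `ζ` in the
sector `D_{ν,θ₀}` of sufficiently large modulus. -/
theorem statement_16
    (ξ₀m ξ₀p ξ₁m ξ₁p ν C C₁ : ℝ)
    (hord : ξ₀m < ξ₀p ∧ ξ₀p < ξ₁m ∧ ξ₁m < ξ₁p) (hν : 0 ≤ ν) (hC : 0 < C) (hC₁ : 0 < C₁)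
    (w₀ w₁ ω : ℝ → ℝ) (lam : ℝ → ℝ → ℂ)
    (hw₀_pos : ∀ᵐ y, y ∈ Icc ξ₀m ξ₀p → 0 < w₀ y)
    (hw₁_pos : ∀ᵐ x, x ∈ Icc ξ₁m ξ₁p → 0 < w₁ x)
    (hw₀_int : IntegrableOn w₀ (Icc ξ₀m ξ₀p)) (hw₁_int : IntegrableOn w₁ (Icc ξ₁m ξ₁p))
    (hω_nonneg : ∀ᵐ z, z ∈ Ici ν → 0 ≤ ω z) (hω_int : IntegrableOn ω (Ici ν))
    -- (a1): `u : I₀ → I₁` is a bijective C¹-diffeomorphism, with inverse `uinv`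
    (u uinv : ℝ → ℝ)
    (hu_bij : BijOn u (Icc ξ₀m ξ₀p) (Icc ξ₁m ξ₁p))
    (hu_C1 : ContDiffOn ℝ 1 u (Icc ξ₀m ξ₀p))
    (huinv_C1 : ContDiffOn ℝ 1 uinv (Icc ξ₁m ξ₁p))
    (hu_inv : ∀ y ∈ Icc ξ₀m ξ₀p, uinv (u y) = y)
    (hinv_u : ∀ x ∈ Icc ξ₁m ξ₁p, u (uinv x) = x)
    (huinv_maps : MapsTo uinv (Icc ξ₁m ξ₁p) (Icc ξ₀m ξ₀p))
    (hu_deriv : ∀ y ∈ Icc ξ₀m ξ₀p, deriv u y ≠ 0)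
    -- (a2)
    (v : ℝ → ℝ → ℝ)
    (hv_def : ∀ y z, v y z = ‖lam y z‖ ^ 2 * ω z)
    (hlam_meas : Measurable fun p : ℝ × ℝ => lam p.1 p.2)
    (hv_int : ∀ y ∈ Icc ξ₀m ξ₀p, (∫ z in Ici ν, v y z) ≤ C)
    (hw : ∀ y ∈ Icc ξ₀m ξ₀p, w₀ y ≤ C₁ * |deriv u y| * w₁ (u y))
    -- the Radon–Nikodým factor `ϱ`
    (ρ : ℝ → ℝ)
    (hρ : ∀ x ∈ Icc ξ₁m ξ₁p, ρ x = w₀ (uinv x) / (|deriv u (uinv x)| * w₁ x))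
    -- (a3): holomorphic extension of `v(y,·)` and the open set `Ω`
    (vC : ℝ → ℂ → ℂ) (Ωv : ℝ → Set ℂ) (Ω : Set ℂ)
    (hΩv_open : ∀ y ∈ Icc ξ₀m ξ₀p, IsOpen (Ωv y))
    (hΩv_sup : ∀ y ∈ Icc ξ₀m ξ₀p, ∀ z ∈ Ioi ν, (z : ℂ) ∈ Ωv y)
    (hvC_holo : ∀ y ∈ Icc ξ₀m ξ₀p, DifferentiableOn ℂ (vC y) (Ωv y))
    (hvC_agree : ∀ y ∈ Icc ξ₀m ξ₀p, ∀ z ∈ Ioi ν, vC y (z : ℂ) = (v y z : ℂ))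
    (hΩ_open : IsOpen Ω)
    (hΩ_sup : ∀ ξ ∈ Ioi (ξ₀m + ν), (ξ : ℂ) ∈ Ω)
    (hΩ_sub : ∀ y ∈ Icc ξ₀m ξ₀p, ∀ ζ ∈ Ω, ζ - (y : ℂ) ∈ Ωv y)
    -- the analytic continuation `𝒢_Ω` of `G` across the cut, and the principal value `I`
    (Ipv : ℝ → ℝ → ℝ)
    (hIpv : ∀ y ∈ Icc ξ₀m ξ₀p, ∀ ξ : ℝ, y + ν < ξ → HasPrincipalValue v ν y ξ (Ipv y ξ))
    (GΩ : ℝ → ℂ → ℂ)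
    (hGΩ_holo : ∀ y ∈ Icc ξ₀m ξ₀p, DifferentiableOn ℂ (GΩ y) (Ω \ slitSet (y + ν)))
    (hGΩ_up : ∀ y ∈ Icc ξ₀m ξ₀p, ∀ ζ ∈ Ω, 0 < ζ.im → GΩ y ζ = bandG v ν y ζ)
    (hGΩ_real : ∀ y ∈ Icc ξ₀m ξ₀p, ∀ ξ : ℝ, y + ν < ξ → (ξ : ℂ) ∈ Ω →
      GΩ y (ξ : ℂ) = (Ipv y ξ : ℂ) + Real.pi * Complex.I * vC y ((ξ : ℂ) - y))
    (hGΩ_low : ∀ y ∈ Icc ξ₀m ξ₀p, ∀ ζ ∈ Ω, ζ.im < 0 →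
      GΩ y ζ = bandG v ν y ζ + 2 * Real.pi * Complex.I * vC y (ζ - y))
    -- (a4): joint continuity
    (hcont : ContinuousOn (fun p : ℝ × ℂ => (ρ p.1 : ℂ) * GΩ (uinv p.1) p.2)
      {p : ℝ × ℂ | p.1 ∈ Icc ξ₁m ξ₁p ∧ p.2 ∈ Ω \ slitSet (uinv p.1 + ν)})
    (hcont' : ContinuousOn (fun p : ℝ × ℂ => (ρ p.1 : ℂ) * deriv (GΩ (uinv p.1)) p.2)
      {p : ℝ × ℂ | p.1 ∈ Icc ξ₁m ξ₁p ∧ p.2 ∈ Ω \ slitSet (uinv p.1 + ν)})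
    -- (a5)
    (ha5 : ∀ x ∈ Icc ξ₁m ξ₁p, uinv x + ν < x)
    -- regularity of `v` and (a6), (a7)
    (hv_intOn : ∀ y ∈ Icc ξ₀m ξ₀p, IntegrableOn (v y) (Ici ν))
    (hv_diff : ∀ y ∈ Icc ξ₀m ξ₀p, ∀ z ∈ Ioi ν, DifferentiableAt ℝ (v y) z)
    (C₂ C₃ : ℝ) (hC₂ : 0 < C₂) (hC₃ : 0 < C₃)
    (ha6 : ∀ y ∈ Icc ξ₀m ξ₀p, ∀ z ∈ Ici ν, v y z ≤ C₂)
    (ha6' : ∀ y ∈ Icc ξ₀m ξ₀p, ∀ z ∈ Ici ν, |deriv (v y) z| ≤ C₃)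
    (ha7 : ∀ y ∈ Icc ξ₀m ξ₀p, v y ν = 0)
    -- (a8)
    (N : Set ℝ) (hN_sub : N ⊆ Icc ξ₁m ξ₁p) (hN_null : MeasureTheory.volume N = 0)
    (ν₁ : ℝ) (hν₁_pos : 0 < ν₁)
    (hν₁_gt : ∀ x ∈ Icc ξ₁m ξ₁p, x - uinv x - ν < ν₁)
    (ha8 : ∀ x ∈ Icc ξ₁m ξ₁p \ N, ∀ ξ ∈ Ioo ν (ν + ν₁), 0 < ρ x * v (uinv x) ξ)
    -- `𝒢^Ω`, the continuation of `G` from the lower half-plane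
    (GΩ' : ℝ → ℂ → ℂ)
    (hGΩ'_holo : ∀ y ∈ Icc ξ₀m ξ₀p, DifferentiableOn ℂ (GΩ' y) (Ω \ slitSet (y + ν)))
    (hGΩ'_up : ∀ y ∈ Icc ξ₀m ξ₀p, ∀ ζ ∈ Ω, 0 < ζ.im →
      GΩ' y ζ = bandG v ν y ζ - 2 * Real.pi * Complex.I * vC y (ζ - y))
    (hGΩ'_real : ∀ y ∈ Icc ξ₀m ξ₀p, ∀ ξ : ℝ, y + ν < ξ → (ξ : ℂ) ∈ Ω →
      GΩ' y (ξ : ℂ) = (Ipv y ξ : ℂ) - Real.pi * Complex.I * vC y ((ξ : ℂ) - y))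
    (hGΩ'_low : ∀ y ∈ Icc ξ₀m ξ₀p, ∀ ζ ∈ Ω, ζ.im < 0 → GΩ' y ζ = bandG v ν y ζ)
    -- the coupling bound `δ₂` from the time-evolution theorem
    (δ₂ : ℝ) (hδ₂ : 0 < δ₂)
    -- (a10): the closed sector lies in `Ω(v) = ⋂_{y∈I₀}(Ω−y)`
    (θ₀ : ℝ) (hθ₀ : 0 < θ₀ ∧ θ₀ < Real.pi / 4)
    (ha10 : closure (sector ν θ₀) ⊆ {ζ : ℂ | ∀ y ∈ Icc ξ₀m ξ₀p, ζ + (y : ℂ) ∈ Ω})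
    -- (a12): power decay of `v(y,·)` in `Ω(v)`
    (Cy qy : ℝ → ℝ)
    (ha12 : ∀ y ∈ Icc ξ₀m ξ₀p, 0 < Cy y ∧ 0 < qy y ∧
      ∀ ζ : ℂ, (∀ y' ∈ Icc ξ₀m ξ₀p, ζ + (y' : ℂ) ∈ Ω) →
        ‖vC y ζ‖ < Cy y * ‖ζ‖ ^ (-(qy y))) :
    ∀ x ∈ Icc ξ₁m ξ₁p, ∀ κ : ℝ, 0 < |κ| → |κ| < δ₂ →
      ∃ C₁₀ > (0 : ℝ), ∃ R : ℝ, ∀ ζ ∈ sector ν θ₀, R ≤ ‖ζ‖ →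
        ‖gfun ρ uinv GΩ GΩ' vC κ x ζ‖ ≤ C₁₀ / ‖ζ‖ ^ (2 + qy (uinv x)) := by

  intro x hx κ hκpos hκδ
  set y := uinv x with hy_def
  have hy : y ∈ Icc ξ₀m ξ₀p := huinv_maps hx
  obtain ⟨hCy_pos, hqy_pos, hvdecay⟩ := ha12 y hy
  have hdiff := hv_diff y hy
  have hnn : ∀ z ∈ Ioi ν, 0 ≤ v y z := by
    apply nonneg_of_ae_nonneg
    · intro z hz; exact (hdiff z hz).continuousAt
    · filter_upwards [hω_nonneg] with z hz hz'
      rw [hv_def]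
      exact mul_nonneg (by positivity) (hz hz')
  set M₀ := ∫ z in Ioi ν, v y z with hM₀
  set M := M₀ + 2 * C₃ + 2 * Real.pi * C₂ with hM
  set MG := M + 2 * Real.pi * Cy y with hMG
  set B := |x - y| + κ ^ 2 * |ρ x| * MG with hB
  have hπ := Real.pi_pos
  have hcosθ : 0 < Real.cos θ₀ :=
    Real.cos_pos_of_mem_Ioo ⟨by linarith [hθ₀.1], by linarith [hθ₀.2]⟩
  refine ⟨4 * κ ^ 2 * |ρ x| * Cy y + 1, by positivity,
    max (max 1 ((ν + 2) / Real.cos θ₀)) (2 * B + 1), ?_⟩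
  intro ζ hζ hR
  obtain ⟨hζre, hζarg1, hζarg2⟩ := hζ
  have hζrepos : 0 < ζ.re := lt_of_le_of_lt hν hζre
  have hζne : ζ ≠ 0 := by
    intro h; rw [h] at hζrepos; simp at hζrepos
  have hζabs_pos : 0 < ‖ζ‖ := norm_pos_iff.mpr hζne
  have hζ1 : 1 ≤ ‖ζ‖ :=
    le_trans (le_trans (le_max_left _ _) (le_max_left _ _)) hR
  have him : ζ.im < 0 := Complex.arg_neg_iff.1 hζarg2
  have hre_ge : ν + 2 ≤ ζ.re := by
    have hcos : Real.cos θ₀ ≤ Real.cos ζ.arg := by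
      rw [← Real.cos_abs ζ.arg]
      apply Real.cos_le_cos_of_nonneg_of_le_pi (abs_nonneg _) (by linarith [hθ₀.1])
      rw [abs_le]
      constructor <;> [linarith; linarith]
    have hre_eq : ζ.re = ‖ζ‖ * Real.cos ζ.arg := by
      rw [Complex.cos_arg hζne]
      field_simp
    calc ν + 2 = ((ν + 2) / Real.cos θ₀) * Real.cos θ₀ := by field_simp
      _ ≤ ‖ζ‖ * Real.cos θ₀ := by
          apply mul_le_mul_of_nonneg_right ?_ hcosθ.le
          exact le_trans (le_trans (le_max_right _ _) (le_max_left _ _)) hR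
      _ ≤ ‖ζ‖ * Real.cos ζ.arg :=
          mul_le_mul_of_nonneg_left hcos hζabs_pos.le
      _ = ζ.re := hre_eq.symm
  have hmem : ∀ y' ∈ Icc ξ₀m ξ₀p, ζ + (y' : ℂ) ∈ Ω :=
    ha10 (subset_closure ⟨hζre, hζarg1, hζarg2⟩)
  have hΩζy : ζ + (y : ℂ) ∈ Ω := hmem y hy
  have him' : (ζ + (y : ℂ)).im < 0 := by simpa using him
  have hband_eq : bandG v ν y (ζ + (y : ℂ)) = ∫ z in Ioi ν, (v y z : ℂ) / ((z : ℂ) - ζ) := by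
    unfold bandG
    apply MeasureTheory.integral_congr_ae (Filter.EventuallyEq.of_eq ?_)
    funext z
    congr 1
    ring
  have hbandbd : ‖bandG v ν y (ζ + (y : ℂ))‖ ≤ M := by
    rw [hband_eq, hM]
    exact cauchy_int_bound (v y) ν C₂ C₃ (hv_intOn y hy) hnn (ha6 y hy) hdiff
      (ha6' y hy) ζ him hre_ge
  have hvbd : ‖vC y ζ‖ ≤ Cy y * ‖ζ‖ ^ (-(qy y)) := by
    have := (hvdecay ζ hmem).le
    exact this
  have hv1 : ‖vC y ζ‖ ≤ Cy y := by
    refine le_trans hvbd ?_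
    calc Cy y * ‖ζ‖ ^ (-(qy y)) ≤ Cy y * 1 :=
          mul_le_mul_of_nonneg_left
            (Real.rpow_le_one_of_one_le_of_nonpos hζ1 (neg_nonpos.2 hqy_pos.le)) hCy_pos.le
      _ = Cy y := mul_one _
  have h2piI : ‖(2 * (Real.pi : ℂ) * Complex.I : ℂ)‖ = 2 * Real.pi := by
    simp [map_mul, Complex.norm_I,
      abs_of_nonneg Real.pi_pos.le]
  have hGval : GΩ y (ζ + (y : ℂ)) = bandG v ν y (ζ + (y : ℂ))
      + 2 * (Real.pi : ℂ) * Complex.I * vC y ζ := by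
    have h := hGΩ_low y hy (ζ + (y : ℂ)) hΩζy him'
    simpa using h
  have hG'val : GΩ' y (ζ + (y : ℂ)) = bandG v ν y (ζ + (y : ℂ)) :=
    hGΩ'_low y hy (ζ + (y : ℂ)) hΩζy him'
  have hGbd : ‖GΩ y (ζ + (y : ℂ))‖ ≤ MG := by
    rw [hGval, hMG]
    refine le_trans (norm_add_le _ _) (add_le_add hbandbd ?_)
    rw [norm_mul, h2piI]
    calc 2 * Real.pi * ‖vC y ζ‖ ≤ 2 * Real.pi * Cy y :=
          mul_le_mul_of_nonneg_left hv1 (by positivity)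
      _ = 2 * Real.pi * Cy y := rfl
  have hG'bd : ‖GΩ' y (ζ + (y : ℂ))‖ ≤ MG := by
    rw [hG'val, hMG]
    have : 0 ≤ 2 * Real.pi * Cy y := by positivity
    linarith [hbandbd]
  have hζB : 2 * B + 1 ≤ ‖ζ‖ := le_trans (le_max_right _ _) hR
  have hDbound : ∀ GG : ℝ → ℂ → ℂ, ‖GG y (ζ + (y : ℂ))‖ ≤ MG →
      ‖ζ‖ / 2 ≤ ‖Dfun ρ uinv GG κ x (ζ + (y : ℂ))‖ := by
    intro GG hGG
    have heq : Dfun ρ uinv GG κ x (ζ + (y : ℂ))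
        = -(ζ - (((x : ℂ) - (y : ℂ)) - (κ : ℂ) ^ 2 * (ρ x : ℂ) * GG y (ζ + (y : ℂ)))) := by
      unfold Dfun
      rw [← hy_def]
      ring
    have h1 : ‖((x : ℂ) - (y : ℂ)) - (κ : ℂ) ^ 2 * (ρ x : ℂ) * GG y (ζ + (y : ℂ))‖ ≤ B := by
      refine le_trans (norm_sub_le _ _) ?_
      rw [hB]
      apply add_le_add
      · rw [← Complex.ofReal_sub, Complex.norm_real, Real.norm_eq_abs]
      · rw [norm_mul, norm_mul]
        have hκn : ‖((κ : ℂ)) ^ 2‖ = κ ^ 2 := by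
          rw [norm_pow, Complex.norm_real, Real.norm_eq_abs, sq_abs]
        have hρn : ‖((ρ x : ℝ) : ℂ)‖ = |ρ x| := by
          rw [Complex.norm_real, Real.norm_eq_abs]
        rw [hκn, hρn]
        exact mul_le_mul_of_nonneg_left hGG (by positivity)
    rw [heq, norm_neg]
    have h2 : ‖ζ‖ - ‖((x : ℂ) - (y : ℂ)) - (κ : ℂ) ^ 2 * (ρ x : ℂ) * GG y (ζ + (y : ℂ))‖
        ≤ ‖ζ - (((x : ℂ) - (y : ℂ)) - (κ : ℂ) ^ 2 * (ρ x : ℂ) * GG y (ζ + (y : ℂ)))‖ :=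
      norm_sub_norm_le _ _
    have h3 : ‖ζ‖ = ‖ζ‖ := rfl
    rw [h3] at h2
    linarith
  have hD1 := hDbound GΩ hGbd
  have hD2 := hDbound GΩ' hG'bd
  have hnum : ‖(κ : ℂ) ^ 2 * (ρ x : ℂ) * vC y ζ‖
      ≤ κ ^ 2 * |ρ x| * (Cy y * ‖ζ‖ ^ (-(qy y))) := by
    rw [norm_mul, norm_mul]
    have hκn : ‖((κ : ℂ)) ^ 2‖ = κ ^ 2 := by
      rw [norm_pow, Complex.norm_real, Real.norm_eq_abs, sq_abs]
    have hρn : ‖((ρ x : ℝ) : ℂ)‖ = |ρ x| := by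
      rw [Complex.norm_real, Real.norm_eq_abs]
    rw [hκn, hρn]
    exact mul_le_mul_of_nonneg_left hvbd (by positivity)
  have hgnorm : ‖gfun ρ uinv GΩ GΩ' vC κ x ζ‖
      = ‖(κ : ℂ) ^ 2 * (ρ x : ℂ) * vC y ζ‖ /
        (‖Dfun ρ uinv GΩ κ x (ζ + (y : ℂ))‖ * ‖Dfun ρ uinv GΩ' κ x (ζ + (y : ℂ))‖) := by
    unfold gfun
    rw [← hy_def, norm_div]
    congr 1
    exact norm_mul _ _
  set A := ‖ζ‖ with hA
  have hApos : 0 < A := hζabs_pos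
  have hden_pos : (0 : ℝ) < A / 2 * (A / 2) := by positivity
  have hfrac : ‖gfun ρ uinv GΩ GΩ' vC κ x ζ‖
      ≤ (κ ^ 2 * |ρ x| * (Cy y * A ^ (-(qy y)))) / (A / 2 * (A / 2)) := by
    rw [hgnorm]
    apply div_le_div₀ (by positivity) hnum hden_pos
    exact mul_le_mul hD1 hD2 (by positivity) (norm_nonneg _)
  refine le_trans hfrac ?_
  have hAq : (0 : ℝ) < A ^ (qy y) := Real.rpow_pos_of_pos hApos _
  have hA2q_pos : (0 : ℝ) < A ^ ((2 : ℝ) + qy y) := Real.rpow_pos_of_pos hApos _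
  have hA2q : A ^ ((2 : ℝ) + qy y) = A ^ 2 * A ^ (qy y) := by
    rw [Real.rpow_add hApos]
    congr 1
    rw [show ((2 : ℝ)) = ((2 : ℕ) : ℝ) by norm_num, Real.rpow_natCast]
  rw [Real.rpow_neg hApos.le]
  rw [div_le_div_iff₀ hden_pos hA2q_pos, hA2q]
  have hexp : κ ^ 2 * |ρ x| * (Cy y * (A ^ (qy y))⁻¹) * (A ^ 2 * A ^ (qy y))
      = κ ^ 2 * |ρ x| * Cy y * A ^ 2 := by
    field_simp
  rw [hexp]
  have hring : (4 * κ ^ 2 * |ρ x| * Cy y + 1) * (A / 2 * (A / 2))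
      = κ ^ 2 * |ρ x| * Cy y * A ^ 2 + A ^ 2 / 4 := by ring
  rw [hring]
  have hA2 : 0 ≤ A ^ 2 := sq_nonneg A
  linarith
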